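/- Let X be a complex Banach space and let T1, T2 be commuting bounded operators on X with ‖T1‖ < 1 and ‖T2‖ < 1 such that each function A_{Ti}(x) = (‖x‖² − ‖Ti x‖²)^{1/2} defines a norm on X (i = 1, 2). Let X1 and X2 be complex normed spaces together with linear bijections j_i : X → X_i satisfying ‖j_i x‖_{X_i} = A_{Ti}(x) for all x ∈ X (i.e. X_i realizes the normed space (X, A_{Ti})). Suppose there is a surjective linear isometry S on X1 ⊕₂ X2 satisfying S(j_1(T2 x), j_2 x) = (j_1 x, j_2(T1 x)) for all x ∈ X. Then there exist commuting isometries V1, V2 on the space W = X ⊕₂ ℓ²(ℕ, X1 ⊕₂ X2) such that for all nonnegative integers n1, n2 and all x ∈ X, the first coordinate of V1^{n1} V2^{n2}(x, 0) equals T1^{n1} T2^{n2} x, and the closed linear span of { V1^{n1} V2^{n2}(x, 0) : x ∈ X, n1, n2 ≥ 0 } is all of W. In other words, (T1, T2) admits a minimal isometric dilation on X ⊕₂ ℓ²(X1 ⊕₂ X2). -/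

import Mathlib

noncomputable section AndoDil
set_option linter.unusedSectionVars false
set_option maxHeartbeats 1000000

variable {X X1 X2 : Type*}
  [NormedAddCommGroup X] [NormedSpace ℂ X]
  [NormedAddCommGroup X1] [NormedSpace ℂ X1]
  [NormedAddCommGroup X2] [NormedSpace ℂ X2]

local notation "Y" => WithLp 2 (X1 × X2)
local notation "L" => lp (fun _ : ℕ => WithLp 2 (X1 × X2)) 2

/-- pair constructor into the L² product, avoiding instance confusion -/
def pmk (a : X1) (b : X2) : WithLp 2 (X1 × X2) := WithLp.toLp 2 (a, b)

@[simp] lemma pmk_fst (a : X1) (b : X2) : (pmk a b).fst = a := rfl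
@[simp] lemma pmk_snd (a : X1) (b : X2) : (pmk a b).snd = b := rfl
lemma pmk_eta (y : Y) : pmk y.fst y.snd = y := rfl
@[simp] lemma pmk_zero : (pmk (0 : X1) (0 : X2)) = 0 := rfl
lemma pmk_add (a a' : X1) (b b' : X2) : pmk a b + pmk a' b' = pmk (a + a') (b + b') := rfl
lemma pmk_smul (c : ℂ) (a : X1) (b : X2) : c • pmk a b = pmk (c • a) (c • b) := rfl

lemma norm_sq_Y (y : Y) : ‖y‖ ^ 2 = ‖y.fst‖ ^ 2 + ‖y.snd‖ ^ 2 :=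
  WithLp.prod_norm_sq_eq_of_L2 y

lemma norm_pmk_sq (a : X1) (b : X2) : ‖pmk a b‖ ^ 2 = ‖a‖ ^ 2 + ‖b‖ ^ 2 :=
  norm_sq_Y _

def consSeq {Z : Type*} (z : Z) (f : ℕ → Z) : ℕ → Z := fun n => Nat.casesOn n z f

@[simp] lemma consSeq_zero {Z : Type*} (z : Z) (f : ℕ → Z) : consSeq z f 0 = z := rfl
@[simp] lemma consSeq_succ {Z : Type*} (z : Z) (f : ℕ → Z) (n : ℕ) :
    consSeq z f (n + 1) = f n := rfl

lemma summable_consSeq {g : ℕ → ℝ} (c : ℝ) (hg : Summable g) :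
    Summable (consSeq c g) := by
  have : Summable (fun n => consSeq c g (n + 1)) := by simpa using hg
  exact (summable_nat_add_iff 1).1 this

lemma tsum_consSeq {g : ℕ → ℝ} (c : ℝ) (hg : Summable g) :
    ∑' n, consSeq c g n = c + ∑' n, g n := by
  rw [Summable.tsum_eq_zero_add (summable_consSeq c hg)]
  simp

lemma two_toReal : ((2 : ENNReal)).toReal = 2 := by norm_num

lemma memℓp_two_iff (f : ℕ → Y) :
    Memℓp f 2 ↔ Summable (fun k => ‖f k‖ ^ 2) := by
  rw [memℓp_gen_iff (by rw [two_toReal]; norm_num)]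
  constructor <;> intro h <;>
  · convert h using 1
    funext k
    rw [two_toReal, Real.rpow_two]

lemma summable_norm_sq (m : L) : Summable (fun k => ‖m k‖ ^ 2) :=
  (memℓp_two_iff _).1 m.2

lemma norm_sq_lp (m : L) : ‖m‖ ^ 2 = ∑' k, ‖m k‖ ^ 2 := by
  have := lp.norm_rpow_eq_tsum (p := 2) (by rw [two_toReal]; norm_num) m
  rw [two_toReal] at this
  rw [← Real.rpow_two, this]
  exact tsum_congr fun k => Real.rpow_two _

lemma norm_consSeq_sq {Z : Type*} [Norm Z] (z : Z) (f : ℕ → Z) (k : ℕ) :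
    ‖consSeq z f k‖ ^ 2 = consSeq (‖z‖ ^ 2) (fun j => ‖f j‖ ^ 2) k := by
  cases k <;> rfl

section Maps

variable (S : WithLp 2 (X1 × X2) ≃ₗᵢ[ℂ] WithLp 2 (X1 × X2))
variable (j1 : X ≃ₗ[ℂ] X1) (j2 : X ≃ₗ[ℂ] X2)

lemma summable_fst (m : L) : Summable fun k => ‖(S (m k)).fst‖ ^ 2 := by
  refine Summable.of_nonneg_of_le (fun k => sq_nonneg _) (fun k => ?_) (summable_norm_sq m)
  have h := norm_sq_Y (S (m k))
  have h2 : ‖S (m k)‖ = ‖m k‖ := S.norm_map _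
  rw [h2] at h
  nlinarith [sq_nonneg ‖(S (m k)).snd‖]

lemma summable_snd (m : L) : Summable fun k => ‖(S (m k)).snd‖ ^ 2 := by
  refine Summable.of_nonneg_of_le (fun k => sq_nonneg _) (fun k => ?_) (summable_norm_sq m)
  have h := norm_sq_Y (S (m k))
  have h2 : ‖S (m k)‖ = ‖m k‖ := S.norm_map _
  rw [h2] at h
  nlinarith [sq_nonneg ‖(S (m k)).fst‖]

lemma summable_fst' (m : L) : Summable fun k => ‖(m k).fst‖ ^ 2 := by
  refine Summable.of_nonneg_of_le (fun k => sq_nonneg _) (fun k => ?_) (summable_norm_sq m)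
  have h := norm_sq_Y (m k)
  nlinarith [sq_nonneg ‖(m k).snd‖]

lemma summable_snd' (m : L) : Summable fun k => ‖(m k).snd‖ ^ 2 := by
  refine Summable.of_nonneg_of_le (fun k => sq_nonneg _) (fun k => ?_) (summable_norm_sq m)
  have h := norm_sq_Y (m k)
  nlinarith [sq_nonneg ‖(m k).fst‖]

/-- the ℓ²-part of V1 -/
def F1 (x : X) (m : L) : ℕ → Y :=
  fun k => pmk (consSeq (j1 x) (fun j => (S (m j)).fst) k) ((S (m k)).snd)

/-- the ℓ²-part of V2 -/
def F2 (x : X) (m : L) : ℕ → Y :=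
  fun k => S.symm (pmk ((m k).fst) (consSeq (j2 x) (fun j => (m j).snd) k))

lemma summable_F1 (x : X) (m : L) : Summable fun k => ‖F1 S j1 x m k‖ ^ 2 := by
  have : (fun k => ‖F1 S j1 x m k‖ ^ 2) = fun k =>
      consSeq (‖j1 x‖ ^ 2) (fun j => ‖(S (m j)).fst‖ ^ 2) k + ‖(S (m k)).snd‖ ^ 2 := by
    funext k
    rw [F1, norm_pmk_sq, norm_consSeq_sq]
  rw [this]
  exact (summable_consSeq _ (summable_fst S m)).add (summable_snd S m)

lemma memℓp_F1 (x : X) (m : L) : Memℓp (F1 S j1 x m) 2 :=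
  (memℓp_two_iff _).2 (summable_F1 S j1 x m)

lemma tsum_F1 (x : X) (m : L) :
    ∑' k, ‖F1 S j1 x m k‖ ^ 2 = ‖j1 x‖ ^ 2 + ‖m‖ ^ 2 := by
  have h1 : (fun k => ‖F1 S j1 x m k‖ ^ 2) = fun k =>
      consSeq (‖j1 x‖ ^ 2) (fun j => ‖(S (m j)).fst‖ ^ 2) k + ‖(S (m k)).snd‖ ^ 2 := by
    funext k
    rw [F1, norm_pmk_sq, norm_consSeq_sq]
  rw [h1, Summable.tsum_add (summable_consSeq _ (summable_fst S m)) (summable_snd S m),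
    tsum_consSeq _ (summable_fst S m), add_assoc,
    ← Summable.tsum_add (summable_fst S m) (summable_snd S m)]
  congr 1
  rw [norm_sq_lp]
  refine tsum_congr fun k => ?_
  rw [← norm_sq_Y, S.norm_map]

lemma summable_F2 (x : X) (m : L) : Summable fun k => ‖F2 S j2 x m k‖ ^ 2 := by
  have : (fun k => ‖F2 S j2 x m k‖ ^ 2) = fun k =>
      ‖(m k).fst‖ ^ 2 + consSeq (‖j2 x‖ ^ 2) (fun j => ‖(m j).snd‖ ^ 2) k := by
    funext k
    rw [F2, S.symm.norm_map, norm_pmk_sq, norm_consSeq_sq]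
  rw [this]
  exact (summable_fst' m).add (summable_consSeq _ (summable_snd' m))

lemma memℓp_F2 (x : X) (m : L) : Memℓp (F2 S j2 x m) 2 :=
  (memℓp_two_iff _).2 (summable_F2 S j2 x m)

lemma tsum_F2 (x : X) (m : L) :
    ∑' k, ‖F2 S j2 x m k‖ ^ 2 = ‖j2 x‖ ^ 2 + ‖m‖ ^ 2 := by
  have h1 : (fun k => ‖F2 S j2 x m k‖ ^ 2) = fun k =>
      ‖(m k).fst‖ ^ 2 + consSeq (‖j2 x‖ ^ 2) (fun j => ‖(m j).snd‖ ^ 2) k := by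
    funext k
    rw [F2, S.symm.norm_map, norm_pmk_sq, norm_consSeq_sq]
  rw [h1, Summable.tsum_add (summable_fst' m) (summable_consSeq _ (summable_snd' m)),
    tsum_consSeq _ (summable_snd' m)]
  have : ∑' k, ‖m k‖ ^ 2 = (∑' k, ‖(m k).fst‖ ^ 2) + ∑' k, ‖(m k).snd‖ ^ 2 := by
    rw [← Summable.tsum_add (summable_fst' m) (summable_snd' m)]
    exact tsum_congr fun k => norm_sq_Y (m k)
  rw [norm_sq_lp, this]
  ring


variable (T1 T2 : X →L[ℂ] X)

/-- V1 as a plain function on the dilation space -/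
def V1fun (w : WithLp 2 (X × lp (fun _ : ℕ => WithLp 2 (X1 × X2)) 2)) :
    WithLp 2 (X × lp (fun _ : ℕ => WithLp 2 (X1 × X2)) 2) :=
  WithLp.toLp 2 (T1 w.fst, (⟨F1 S j1 w.fst w.snd, memℓp_F1 S j1 w.fst w.snd⟩ : L))

def V2fun (w : WithLp 2 (X × lp (fun _ : ℕ => WithLp 2 (X1 × X2)) 2)) :
    WithLp 2 (X × lp (fun _ : ℕ => WithLp 2 (X1 × X2)) 2) :=
  WithLp.toLp 2 (T2 w.fst, (⟨F2 S j2 w.fst w.snd, memℓp_F2 S j2 w.fst w.snd⟩ : L))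

lemma V1fun_fst (w) : (V1fun S j1 T1 w).fst = T1 w.fst := rfl
lemma V1fun_snd_apply (w) (k : ℕ) :
    ((V1fun S j1 T1 w).snd : ℕ → Y) k = F1 S j1 w.fst w.snd k := rfl

lemma wext {w w' : WithLp 2 (X × lp (fun _ : ℕ => WithLp 2 (X1 × X2)) 2)}
    (h1 : w.fst = w'.fst) (h2 : w.snd = w'.snd) : w = w' := by
  cases w; cases w'; exact congrArg (WithLp.toLp 2) (Prod.ext h1 h2)

lemma lpext {m m' : L} (h : ∀ k, (m : ℕ → Y) k = m' k) : m = m' :=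
  lp.ext (funext h)

lemma V1fun_add (w w') :
    V1fun S j1 T1 (w + w') = V1fun S j1 T1 w + V1fun S j1 T1 w' := by
  refine wext ?_ ?_
  · show T1 (w + w').fst = T1 w.fst + T1 w'.fst
    rw [WithLp.add_fst, map_add]
  · refine lpext fun k => ?_
    show F1 S j1 (w + w').fst (w + w').snd k = F1 S j1 w.fst w.snd k + F1 S j1 w'.fst w'.snd k
    rw [WithLp.add_fst, WithLp.add_snd]
    have hc : ∀ j, ((w.snd + w'.snd : L) : ℕ → Y) j = w.snd j + w'.snd j := by
      intro j; rw [lp.coeFn_add]; rfl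
    simp only [F1, hc, map_add, map_add j1]
    cases k with
    | zero => simp [pmk_add, WithLp.add_fst, WithLp.add_snd]
    | succ n => simp [pmk_add, WithLp.add_fst, WithLp.add_snd]

lemma V1fun_smul (c : ℂ) (w) :
    V1fun S j1 T1 (c • w) = c • V1fun S j1 T1 w := by
  refine wext ?_ ?_
  · show T1 (c • w).fst = c • T1 w.fst
    rw [WithLp.smul_fst, map_smul]
  · refine lpext fun k => ?_
    have hrhs : ((c • (V1fun S j1 T1 w) : _).snd : ℕ → Y) k = c • F1 S j1 w.fst w.snd k := by
      rw [WithLp.smul_snd, lp.coeFn_smul]; rfl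
    rw [hrhs]
    show F1 S j1 (c • w).fst (c • w).snd k = c • F1 S j1 w.fst w.snd k
    rw [WithLp.smul_fst, WithLp.smul_snd]
    have hc : ∀ j, ((c • w.snd : L) : ℕ → Y) j = c • (w.snd j) := by
      intro j; rw [lp.coeFn_smul]; rfl
    simp only [F1, hc, map_smul]
    cases k with
    | zero => simp [pmk_smul, WithLp.smul_fst, WithLp.smul_snd]
    | succ n => simp [pmk_smul, WithLp.smul_fst, WithLp.smul_snd]


lemma V2fun_add (w w') :
    V2fun S j2 T2 (w + w') = V2fun S j2 T2 w + V2fun S j2 T2 w' := by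
  refine wext ?_ ?_
  · show T2 (w + w').fst = T2 w.fst + T2 w'.fst
    rw [WithLp.add_fst, map_add]
  · refine lpext fun k => ?_
    show F2 S j2 (w + w').fst (w + w').snd k = F2 S j2 w.fst w.snd k + F2 S j2 w'.fst w'.snd k
    rw [WithLp.add_fst, WithLp.add_snd]
    have hc : ∀ j, ((w.snd + w'.snd : L) : ℕ → Y) j = w.snd j + w'.snd j := by
      intro j; rw [lp.coeFn_add]; rfl
    simp only [F2, hc, map_add, map_add j2]
    cases k with
    | zero =>
        rw [← map_add S.symm]
        simp [pmk_add, WithLp.add_fst, WithLp.add_snd]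
    | succ n =>
        rw [← map_add S.symm]
        simp [pmk_add, WithLp.add_fst, WithLp.add_snd]

lemma V2fun_smul (c : ℂ) (w) :
    V2fun S j2 T2 (c • w) = c • V2fun S j2 T2 w := by
  refine wext ?_ ?_
  · show T2 (c • w).fst = c • T2 w.fst
    rw [WithLp.smul_fst, map_smul]
  · refine lpext fun k => ?_
    have hrhs : ((c • (V2fun S j2 T2 w) : _).snd : ℕ → Y) k = c • F2 S j2 w.fst w.snd k := by
      rw [WithLp.smul_snd, lp.coeFn_smul]; rfl
    rw [hrhs]
    show F2 S j2 (c • w).fst (c • w).snd k = c • F2 S j2 w.fst w.snd k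
    rw [WithLp.smul_fst, WithLp.smul_snd]
    have hc : ∀ j, ((c • w.snd : L) : ℕ → Y) j = c • (w.snd j) := by
      intro j; rw [lp.coeFn_smul]; rfl
    simp only [F2, hc, map_smul]
    cases k with
    | zero =>
        rw [← map_smul S.symm]
        simp [pmk_smul, WithLp.smul_fst, WithLp.smul_snd]
    | succ n =>
        rw [← map_smul S.symm]
        simp [pmk_smul, WithLp.smul_fst, WithLp.smul_snd]

lemma norm_sq_W (w : WithLp 2 (X × lp (fun _ : ℕ => WithLp 2 (X1 × X2)) 2)) :
    ‖w‖ ^ 2 = ‖w.fst‖ ^ 2 + ‖w.snd‖ ^ 2 :=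
  WithLp.prod_norm_sq_eq_of_L2 w

lemma norm_V1fun (hT1' : ∀ x : X, ‖T1 x‖ ≤ ‖x‖)
    (hj1 : ∀ x : X, ‖j1 x‖ = Real.sqrt (‖x‖ ^ 2 - ‖T1 x‖ ^ 2)) (w) :
    ‖V1fun S j1 T1 w‖ = ‖w‖ := by
  have hj1sq : ∀ x : X, ‖j1 x‖ ^ 2 = ‖x‖ ^ 2 - ‖T1 x‖ ^ 2 := by
    intro x
    rw [hj1 x, Real.sq_sqrt]
    have := hT1' x
    nlinarith [norm_nonneg (T1 x), norm_nonneg x]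
  have key : ‖V1fun S j1 T1 w‖ ^ 2 = ‖w‖ ^ 2 := by
    rw [norm_sq_W, norm_sq_W w]
    have h2 : ‖(V1fun S j1 T1 w).snd‖ ^ 2 = ‖j1 w.fst‖ ^ 2 + ‖w.snd‖ ^ 2 := by
      rw [norm_sq_lp]
      exact tsum_F1 S j1 w.fst w.snd
    rw [h2]
    show ‖T1 w.fst‖ ^ 2 + (‖j1 w.fst‖ ^ 2 + ‖w.snd‖ ^ 2) = ‖w.fst‖ ^ 2 + ‖w.snd‖ ^ 2
    rw [hj1sq]
    ring
  calc ‖V1fun S j1 T1 w‖ = Real.sqrt (‖V1fun S j1 T1 w‖ ^ 2) :=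
        (Real.sqrt_sq (norm_nonneg _)).symm
    _ = Real.sqrt (‖w‖ ^ 2) := by rw [key]
    _ = ‖w‖ := Real.sqrt_sq (norm_nonneg _)

lemma norm_V2fun (hT2' : ∀ x : X, ‖T2 x‖ ≤ ‖x‖)
    (hj2 : ∀ x : X, ‖j2 x‖ = Real.sqrt (‖x‖ ^ 2 - ‖T2 x‖ ^ 2)) (w) :
    ‖V2fun S j2 T2 w‖ = ‖w‖ := by
  have hj2sq : ∀ x : X, ‖j2 x‖ ^ 2 = ‖x‖ ^ 2 - ‖T2 x‖ ^ 2 := by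
    intro x
    rw [hj2 x, Real.sq_sqrt]
    have := hT2' x
    nlinarith [norm_nonneg (T2 x), norm_nonneg x]
  have key : ‖V2fun S j2 T2 w‖ ^ 2 = ‖w‖ ^ 2 := by
    rw [norm_sq_W, norm_sq_W w]
    have h2 : ‖(V2fun S j2 T2 w).snd‖ ^ 2 = ‖j2 w.fst‖ ^ 2 + ‖w.snd‖ ^ 2 := by
      rw [norm_sq_lp]
      exact tsum_F2 S j2 w.fst w.snd
    rw [h2]
    show ‖T2 w.fst‖ ^ 2 + (‖j2 w.fst‖ ^ 2 + ‖w.snd‖ ^ 2) = ‖w.fst‖ ^ 2 + ‖w.snd‖ ^ 2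
    rw [hj2sq]
    ring
  calc ‖V2fun S j2 T2 w‖ = Real.sqrt (‖V2fun S j2 T2 w‖ ^ 2) :=
        (Real.sqrt_sq (norm_nonneg _)).symm
    _ = Real.sqrt (‖w‖ ^ 2) := by rw [key]
    _ = ‖w‖ := Real.sqrt_sq (norm_nonneg _)

/-- V1 as a continuous linear map -/
def V1clm (hT1' : ∀ x : X, ‖T1 x‖ ≤ ‖x‖)
    (hj1 : ∀ x : X, ‖j1 x‖ = Real.sqrt (‖x‖ ^ 2 - ‖T1 x‖ ^ 2)) :
    WithLp 2 (X × lp (fun _ : ℕ => WithLp 2 (X1 × X2)) 2) →L[ℂ]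
      WithLp 2 (X × lp (fun _ : ℕ => WithLp 2 (X1 × X2)) 2) :=
  LinearMap.mkContinuous
    { toFun := V1fun S j1 T1
      map_add' := V1fun_add S j1 T1
      map_smul' := V1fun_smul S j1 T1 } 1
    (fun w => by
      show ‖V1fun S j1 T1 w‖ ≤ 1 * ‖w‖
      rw [norm_V1fun S j1 T1 hT1' hj1 w, one_mul])

def V2clm (hT2' : ∀ x : X, ‖T2 x‖ ≤ ‖x‖)
    (hj2 : ∀ x : X, ‖j2 x‖ = Real.sqrt (‖x‖ ^ 2 - ‖T2 x‖ ^ 2)) :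
    WithLp 2 (X × lp (fun _ : ℕ => WithLp 2 (X1 × X2)) 2) →L[ℂ]
      WithLp 2 (X × lp (fun _ : ℕ => WithLp 2 (X1 × X2)) 2) :=
  LinearMap.mkContinuous
    { toFun := V2fun S j2 T2
      map_add' := V2fun_add S j2 T2
      map_smul' := V2fun_smul S j2 T2 } 1
    (fun w => by
      show ‖V2fun S j2 T2 w‖ ≤ 1 * ‖w‖
      rw [norm_V2fun S j2 T2 hT2' hj2 w, one_mul])

lemma V1clm_apply (hT1' hj1) (w) : V1clm S j1 T1 hT1' hj1 w = V1fun S j1 T1 w := rfl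
lemma V2clm_apply (hT2' hj2) (w) : V2clm S j2 T2 hT2' hj2 w = V2fun S j2 T2 w := rfl


lemma Vfun_comm (hcomm : T1 ∘L T2 = T2 ∘L T1)
    (hS : ∀ x : X, S (pmk (j1 (T2 x)) (j2 x)) = pmk (j1 x) (j2 (T1 x))) (w) :
    V1fun S j1 T1 (V2fun S j2 T2 w) = V2fun S j2 T2 (V1fun S j1 T1 w) := by
  refine wext ?_ ?_
  · show T1 (T2 w.fst) = T2 (T1 w.fst)
    have := ContinuousLinearMap.ext_iff.1 hcomm w.fst
    simpa using this
  · refine lpext fun k => ?_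
    show F1 S j1 (T2 w.fst) (⟨F2 S j2 w.fst w.snd, memℓp_F2 S j2 w.fst w.snd⟩ : L) k
        = F2 S j2 (T1 w.fst) (⟨F1 S j1 w.fst w.snd, memℓp_F1 S j1 w.fst w.snd⟩ : L) k
    set x := w.fst
    set m := w.snd
    have hSF2 : ∀ j, S (F2 S j2 x m j)
        = pmk ((m j).fst) (consSeq (j2 x) (fun i => (m i).snd) j) := by
      intro j
      rw [F2, S.apply_symm_apply]
    have hL : F1 S j1 (T2 x) (⟨F2 S j2 x m, memℓp_F2 S j2 x m⟩ : L) k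
        = pmk (consSeq (j1 (T2 x)) (fun j => (m j).fst) k)
          (consSeq (j2 x) (fun i => (m i).snd) k) := by
      rw [F1]
      congr 1
      · cases k with
        | zero => rfl
        | succ n =>
            show (S (F2 S j2 x m n)).fst = (m n).fst
            rw [hSF2]
            rfl
      · show (S (F2 S j2 x m k)).snd = _
        rw [hSF2]
        rfl
    rw [hL]
    show _ = S.symm (pmk ((F1 S j1 x m k).fst)
        (consSeq (j2 (T1 x)) (fun j => (F1 S j1 x m j).snd) k))
    cases k with
    | zero =>
        show pmk (j1 (T2 x)) (j2 x) = S.symm (pmk (j1 x) (j2 (T1 x)))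
        rw [← hS x, S.symm_apply_apply]
    | succ n =>
        show pmk ((m n).fst) ((m n).snd)
          = S.symm (pmk ((S (m n)).fst) ((S (m n)).snd))
        rw [pmk_eta, pmk_eta, S.symm_apply_apply]

lemma Vclm_comm (hT1' hj1 hT2' hj2) (hcomm : T1 ∘L T2 = T2 ∘L T1)
    (hS : ∀ x : X, S (pmk (j1 (T2 x)) (j2 x)) = pmk (j1 x) (j2 (T1 x))) :
    V1clm S j1 T1 hT1' hj1 ∘L V2clm S j2 T2 hT2' hj2
      = V2clm S j2 T2 hT2' hj2 ∘L V1clm S j1 T1 hT1' hj1 := by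
  ext w
  exact Vfun_comm S j1 j2 T1 T2 hcomm hS w

lemma fst_V1pow (hT1' hj1) : ∀ (n : ℕ) (w),
    ((V1clm S j1 T1 hT1' hj1 ^ n) w).fst = (T1 ^ n) w.fst := by
  intro n
  induction n with
  | zero => intro w; simp
  | succ n ih =>
      intro w
      rw [pow_succ' (V1clm S j1 T1 hT1' hj1) n, pow_succ' T1 n]
      rw [ContinuousLinearMap.mul_apply, ContinuousLinearMap.mul_apply]
      show (V1fun S j1 T1 ((V1clm S j1 T1 hT1' hj1 ^ n) w)).fst
          = T1 ((T1 ^ n) w.fst)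
      rw [V1fun_fst, ih w]


lemma fst_V2pow (hT2' hj2) : ∀ (n : ℕ) (w),
    ((V2clm S j2 T2 hT2' hj2 ^ n) w).fst = (T2 ^ n) w.fst := by
  intro n
  induction n with
  | zero => intro w; simp
  | succ n ih =>
      intro w
      rw [pow_succ' (V2clm S j2 T2 hT2' hj2) n, pow_succ' T2 n]
      rw [ContinuousLinearMap.mul_apply, ContinuousLinearMap.mul_apply]
      show T2 (((V2clm S j2 T2 hT2' hj2 ^ n) w).fst) = T2 ((T2 ^ n) w.fst)
      rw [ih w]

lemma single_zero' (k : ℕ) : (lp.single 2 k (0 : Y) : L) = 0 := by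
  refine lpext fun j => ?_
  by_cases h : j = k
  · subst h
    rw [lp.single_apply_self]
    rfl
  · rw [lp.single_apply_ne _ _ _ h]
    rfl

lemma single_add' (k : ℕ) (y y' : Y) :
    (lp.single 2 k (y + y') : L) = lp.single 2 k y + lp.single 2 k y' := by
  refine lpext fun j => ?_
  have hc : ((lp.single 2 k y + lp.single 2 k y' : L) : ℕ → Y) j
      = (lp.single 2 k y : L) j + (lp.single 2 k y' : L) j := by
    rw [lp.coeFn_add]; rfl
  rw [hc]
  by_cases h : j = k
  · subst h
    rw [lp.single_apply_self, lp.single_apply_self, lp.single_apply_self]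
  · rw [lp.single_apply_ne _ _ _ h, lp.single_apply_ne _ _ _ h, lp.single_apply_ne _ _ _ h]
    simp

lemma sval (k : ℕ) (y : Y) (i : ℕ) :
    S ((lp.single 2 k y : L) i) = if i = k then S y else 0 := by
  by_cases h : i = k
  · subst h
    rw [lp.single_apply_self, if_pos rfl]
  · rw [lp.single_apply_ne _ _ _ h, if_neg h, map_zero]

/-- computation: V1 on (x, 0) -/
lemma V1fun_base (x : X) :
    V1fun S j1 T1 (WithLp.toLp 2 (x, 0) : WithLp 2 (X × lp (fun _ : ℕ => WithLp 2 (X1 × X2)) 2))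
      = (WithLp.toLp 2 (T1 x, lp.single 2 0 (pmk (j1 x) 0)) :
          WithLp 2 (X × lp (fun _ : ℕ => WithLp 2 (X1 × X2)) 2)) := by
  refine wext rfl ?_
  refine lpext fun k => ?_
  show F1 S j1 x 0 k = (lp.single 2 0 (pmk (j1 x) 0) : L) k
  have h0 : ∀ j, ((0 : L) : ℕ → Y) j = 0 := fun j => by rw [lp.coeFn_zero]; rfl
  cases k with
  | zero =>
      rw [lp.single_apply_self]
      show pmk (j1 x) ((S ((0 : L) 0)).snd) = pmk (j1 x) 0
      rw [h0, map_zero]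
      rfl
  | succ n =>
      rw [lp.single_apply_ne _ _ _ (Nat.succ_ne_zero n)]
      show pmk ((S ((0 : L) n)).fst) ((S ((0 : L) (n+1))).snd) = 0
      rw [h0, h0, map_zero]
      rfl

/-- computation: V2 on (x, 0) -/
lemma V2fun_base (x : X) :
    V2fun S j2 T2 (WithLp.toLp 2 (x, 0) : WithLp 2 (X × lp (fun _ : ℕ => WithLp 2 (X1 × X2)) 2))
      = (WithLp.toLp 2 (T2 x, lp.single 2 0 (S.symm (pmk 0 (j2 x)))) :
          WithLp 2 (X × lp (fun _ : ℕ => WithLp 2 (X1 × X2)) 2)) := by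
  refine wext rfl ?_
  refine lpext fun k => ?_
  show F2 S j2 x 0 k = (lp.single 2 0 (S.symm (pmk 0 (j2 x))) : L) k
  have h0 : ∀ j, ((0 : L) : ℕ → Y) j = 0 := fun j => by rw [lp.coeFn_zero]; rfl
  cases k with
  | zero =>
      rw [lp.single_apply_self]
      show S.symm (pmk ((0 : L) 0).fst (j2 x)) = _
      rw [h0]
      rfl
  | succ n =>
      rw [lp.single_apply_ne _ _ _ (Nat.succ_ne_zero n)]
      show S.symm (pmk ((0 : L) (n+1)).fst (((0 : L) n).snd)) = 0
      rw [h0, h0]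
      show S.symm 0 = 0
      rw [map_zero]

/-- computation: V1 on a single -/
lemma V1fun_single (k : ℕ) (y : Y) :
    V1fun S j1 T1 (WithLp.toLp 2 (0, lp.single 2 k y) : WithLp 2 (X × lp (fun _ : ℕ => WithLp 2 (X1 × X2)) 2))
      = (WithLp.toLp 2 (0, lp.single 2 k (pmk 0 ((S y).snd)) + lp.single 2 (k+1) (pmk ((S y).fst) 0)) :
          WithLp 2 (X × lp (fun _ : ℕ => WithLp 2 (X1 × X2)) 2)) := by
  refine wext (map_zero T1) ?_
  refine lpext fun j => ?_
  have hc : ((lp.single 2 k (pmk 0 ((S y).snd)) + lp.single 2 (k+1) (pmk ((S y).fst) 0) : L) : ℕ → Y) j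
      = (lp.single 2 k (pmk 0 ((S y).snd)) : L) j + (lp.single 2 (k+1) (pmk ((S y).fst) 0) : L) j := by
    rw [lp.coeFn_add]; rfl
  show F1 S j1 0 (lp.single 2 k y) j = ((lp.single 2 k (pmk 0 ((S y).snd)) + lp.single 2 (k+1) (pmk ((S y).fst) 0) : L) : ℕ → Y) j
  rw [hc]
  cases j with
  | zero =>
      by_cases h : k = 0
      · subst h
        rw [lp.single_apply_self, lp.single_apply_ne _ _ _ (by omega : (0:ℕ) ≠ 0+1),
          add_zero]
        show pmk (j1 0) ((S ((lp.single 2 0 y : L) 0)).snd) = pmk 0 ((S y).snd)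
        rw [map_zero j1, sval, if_pos rfl]
      · rw [lp.single_apply_ne _ _ _ (by omega : (0:ℕ) ≠ k),
          lp.single_apply_ne _ _ _ (by omega : (0:ℕ) ≠ k+1), add_zero]
        show pmk (j1 0) ((S ((lp.single 2 k y : L) 0)).snd) = 0
        rw [map_zero j1, sval, if_neg (by omega : ¬(0:ℕ) = k)]
        rfl
  | succ i =>
      show pmk ((S ((lp.single 2 k y : L) i)).fst) ((S ((lp.single 2 k y : L) (i+1))).snd) = _
      by_cases h1 : i = k
      · subst h1
        rw [sval, sval, if_pos rfl, if_neg (by omega : ¬(i+1 = i)),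
          lp.single_apply_ne _ _ _ (by omega : i+1 ≠ i), lp.single_apply_self, zero_add]
        rfl
      · by_cases h2 : i + 1 = k
        · subst h2
          rw [sval, sval, if_neg (by omega : ¬(i = i+1)), if_pos rfl,
            lp.single_apply_self, lp.single_apply_ne _ _ _ (by omega : i+1 ≠ i+1+1), add_zero]
          rfl
        · rw [sval, sval, if_neg h1, if_neg h2,
            lp.single_apply_ne _ _ _ (by omega : i+1 ≠ k),
            lp.single_apply_ne _ _ _ (by omega : i+1 ≠ k+1), add_zero]
          rfl


lemma singleval (k : ℕ) (y : Y) (i : ℕ) :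
    ((lp.single 2 k y : L) : ℕ → Y) i = if i = k then y else 0 := by
  by_cases h : i = k
  · subst h; rw [lp.single_apply_self, if_pos rfl]
  · rw [lp.single_apply_ne _ _ _ h, if_neg h]

/-- computation: V2 on a single -/
lemma V2fun_single (k : ℕ) (y : Y) :
    V2fun S j2 T2 (WithLp.toLp 2 (0, lp.single 2 k y) : WithLp 2 (X × lp (fun _ : ℕ => WithLp 2 (X1 × X2)) 2))
      = (WithLp.toLp 2 (0, lp.single 2 k (S.symm (pmk (y.fst) 0)) + lp.single 2 (k+1) (S.symm (pmk 0 (y.snd)))) :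
          WithLp 2 (X × lp (fun _ : ℕ => WithLp 2 (X1 × X2)) 2)) := by
  refine wext (map_zero T2) ?_
  refine lpext fun j => ?_
  have hc : ((lp.single 2 k (S.symm (pmk (y.fst) 0)) + lp.single 2 (k+1) (S.symm (pmk 0 (y.snd))) : L)
      : ℕ → Y) j
      = (lp.single 2 k (S.symm (pmk (y.fst) 0)) : L) j
        + (lp.single 2 (k+1) (S.symm (pmk 0 (y.snd))) : L) j := by
    rw [lp.coeFn_add]; rfl
  show F2 S j2 0 (lp.single 2 k y) j = ((lp.single 2 k (S.symm (pmk (y.fst) 0)) + lp.single 2 (k+1) (S.symm (pmk 0 (y.snd))) : L) : ℕ → Y) j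
  rw [hc]
  cases j with
  | zero =>
      by_cases h : k = 0
      · subst h
        rw [lp.single_apply_self, lp.single_apply_ne _ _ _ (by omega : (0:ℕ) ≠ 0+1), add_zero]
        show S.symm (pmk (((lp.single 2 0 y : L) 0).fst) (j2 0)) = S.symm (pmk (y.fst) 0)
        rw [map_zero j2, lp.single_apply_self]
      · rw [lp.single_apply_ne _ _ _ (by omega : (0:ℕ) ≠ k),
          lp.single_apply_ne _ _ _ (by omega : (0:ℕ) ≠ k+1), add_zero]
        show S.symm (pmk (((lp.single 2 k y : L) 0).fst) (j2 0)) = 0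
        rw [map_zero j2, singleval, if_neg (by omega : ¬(0:ℕ) = k)]
        show S.symm (0 : Y) = 0
        rw [map_zero]
  | succ i =>
      show S.symm (pmk (((lp.single 2 k y : L) (i+1)).fst) (((lp.single 2 k y : L) i).snd)) = _
      by_cases h1 : i = k
      · subst h1
        rw [singleval, singleval, if_neg (by omega : ¬(i+1 = i)), if_pos rfl,
          lp.single_apply_ne _ _ _ (by omega : i+1 ≠ i), lp.single_apply_self, zero_add]
        rfl
      · by_cases h2 : i + 1 = k
        · subst h2
          rw [singleval, singleval, if_pos rfl, if_neg (by omega : ¬(i = i+1)),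
            lp.single_apply_self, lp.single_apply_ne _ _ _ (by omega : i+1 ≠ i+1+1), add_zero]
          rfl
        · rw [singleval, singleval, if_neg h2, if_neg h1,
            lp.single_apply_ne _ _ _ (by omega : i+1 ≠ k),
            lp.single_apply_ne _ _ _ (by omega : i+1 ≠ k+1), add_zero]
          show S.symm (0 : Y) = 0
          rw [map_zero]

lemma norm_inr (w : WithLp 2 (X × lp (fun _ : ℕ => WithLp 2 (X1 × X2)) 2))
    (h : w.fst = 0) : ‖w‖ = ‖w.snd‖ := by
  have key : ‖w‖ ^ 2 = ‖w.snd‖ ^ 2 := by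
    rw [norm_sq_W, h]
    simp
  calc ‖w‖ = Real.sqrt (‖w‖ ^ 2) := (Real.sqrt_sq (norm_nonneg _)).symm
    _ = Real.sqrt (‖w.snd‖ ^ 2) := by rw [key]
    _ = ‖w.snd‖ := Real.sqrt_sq (norm_nonneg _)

/-- the injection L → W as a continuous linear map -/
def inrW : lp (fun _ : ℕ => WithLp 2 (X1 × X2)) 2 →L[ℂ]
    WithLp 2 (X × lp (fun _ : ℕ => WithLp 2 (X1 × X2)) 2) :=
  LinearMap.mkContinuous
    { toFun := fun m => (WithLp.toLp 2 (0, m) : WithLp 2 (X × lp (fun _ : ℕ => WithLp 2 (X1 × X2)) 2))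
      map_add' := fun u v => by
        refine wext ?_ rfl
        show (0 : X) = 0 + 0
        rw [add_zero]
      map_smul' := fun c u => by
        refine wext ?_ rfl
        show (0 : X) = c • (0 : X)
        rw [smul_zero] } 1
    (fun m => by
      rw [norm_inr _ rfl, one_mul]
      exact le_refl _)

lemma inrW_apply (m : L) : inrW (X := X) m = (WithLp.toLp 2 (0, m) :
    WithLp 2 (X × lp (fun _ : ℕ => WithLp 2 (X1 × X2)) 2)) := rfl

end Maps
end AndoDil

set_option maxHeartbeats 2000000 in
/-- (Theorem 2.4). Let `(T1, T2)` be a commuting pair of strict contractions on a complex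
Banach space `X` such that `A_{Ti}(x) = (‖x‖² - ‖Ti x‖²)^{1/2}` defines a norm on `X` for
`i = 1, 2`, and let `Xi` realize the normed space `(X, A_{Ti})` via a linear bijection `ji`.
If there is a surjective linear isometry `S` on `X1 ⊕₂ X2` with
`S (j1 (T2 x), j2 x) = (j1 x, j2 (T1 x))` for all `x`, then `(T1, T2)` admits a minimal
isometric dilation on `X ⊕₂ ℓ²(ℕ, X1 ⊕₂ X2)`. -/
theorem banach_ando_minimal_isometric_dilation
    (X : Type*) [NormedAddCommGroup X] [NormedSpace ℂ X] [CompleteSpace X]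
    (T1 T2 : X →L[ℂ] X) (hcomm : T1 ∘L T2 = T2 ∘L T1)
    (hT1 : ‖T1‖ < 1) (hT2 : ‖T2‖ < 1)
    (hdef1 : ∀ x : X, Real.sqrt (‖x‖ ^ 2 - ‖T1 x‖ ^ 2) = 0 → x = 0)
    (hdef2 : ∀ x : X, Real.sqrt (‖x‖ ^ 2 - ‖T2 x‖ ^ 2) = 0 → x = 0)
    (htri1 : ∀ x y : X,
      Real.sqrt (‖x + y‖ ^ 2 - ‖T1 (x + y)‖ ^ 2)
        ≤ Real.sqrt (‖x‖ ^ 2 - ‖T1 x‖ ^ 2) + Real.sqrt (‖y‖ ^ 2 - ‖T1 y‖ ^ 2))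
    (htri2 : ∀ x y : X,
      Real.sqrt (‖x + y‖ ^ 2 - ‖T2 (x + y)‖ ^ 2)
        ≤ Real.sqrt (‖x‖ ^ 2 - ‖T2 x‖ ^ 2) + Real.sqrt (‖y‖ ^ 2 - ‖T2 y‖ ^ 2))
    (X1 X2 : Type*) [NormedAddCommGroup X1] [NormedSpace ℂ X1]
    [NormedAddCommGroup X2] [NormedSpace ℂ X2]
    (j1 : X ≃ₗ[ℂ] X1) (j2 : X ≃ₗ[ℂ] X2)
    (hj1 : ∀ x : X, ‖j1 x‖ = Real.sqrt (‖x‖ ^ 2 - ‖T1 x‖ ^ 2))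
    (hj2 : ∀ x : X, ‖j2 x‖ = Real.sqrt (‖x‖ ^ 2 - ‖T2 x‖ ^ 2))
    (S : WithLp 2 (X1 × X2) ≃ₗᵢ[ℂ] WithLp 2 (X1 × X2))
    (hS : ∀ x : X,
      S (WithLp.toLp 2 (j1 (T2 x), j2 x) : WithLp 2 (X1 × X2))
        = (WithLp.toLp 2 (j1 x, j2 (T1 x)) : WithLp 2 (X1 × X2))) :
    ∃ V1 V2 : WithLp 2 (X × lp (fun _ : ℕ => WithLp 2 (X1 × X2)) 2) →L[ℂ]
        WithLp 2 (X × lp (fun _ : ℕ => WithLp 2 (X1 × X2)) 2),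
      (∀ w, ‖V1 w‖ = ‖w‖) ∧ (∀ w, ‖V2 w‖ = ‖w‖) ∧
      V1 ∘L V2 = V2 ∘L V1 ∧
      (∀ (n1 n2 : ℕ) (x : X),
        (WithLp.ofLp (((V1 ^ n1) * (V2 ^ n2))
            (WithLp.toLp 2 (x, 0) : WithLp 2 (X × lp (fun _ : ℕ => WithLp 2 (X1 × X2)) 2)))).1
          = ((T1 ^ n1) * (T2 ^ n2)) x) ∧
      (Submodule.span ℂ
          {w : WithLp 2 (X × lp (fun _ : ℕ => WithLp 2 (X1 × X2)) 2) |
            ∃ (n1 n2 : ℕ) (x : X),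
              w = ((V1 ^ n1) * (V2 ^ n2))
                (WithLp.toLp 2 (x, 0) : WithLp 2 (X × lp (fun _ : ℕ => WithLp 2 (X1 × X2)) 2))}
        ).topologicalClosure = ⊤ := by
  classical
  have hT1' : ∀ x : X, ‖T1 x‖ ≤ ‖x‖ := fun x =>
    (T1.le_opNorm x).trans (mul_le_of_le_one_left (norm_nonneg x) hT1.le)
  have hT2' : ∀ x : X, ‖T2 x‖ ≤ ‖x‖ := fun x =>
    (T2.le_opNorm x).trans (mul_le_of_le_one_left (norm_nonneg x) hT2.le)
  set V1 := V1clm S j1 T1 hT1' hj1 with hV1def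
  set V2 := V2clm S j2 T2 hT2' hj2 with hV2def
  have hS' : ∀ x : X, S (pmk (j1 (T2 x)) (j2 x)) = pmk (j1 x) (j2 (T1 x)) := hS
  have hcommV : V1 ∘L V2 = V2 ∘L V1 :=
    Vclm_comm S j1 j2 T1 T2 hT1' hj1 hT2' hj2 hcomm hS'
  refine ⟨V1, V2, norm_V1fun S j1 T1 hT1' hj1, norm_V2fun S j2 T2 hT2' hj2, hcommV,
    ?_, ?_⟩
  · intro n1 n2 x
    rw [WithLp.ofLp_fst, ContinuousLinearMap.mul_apply, ContinuousLinearMap.mul_apply,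
      fst_V1pow S j1 T1 hT1' hj1 n1, fst_V2pow S j2 T2 hT2' hj2 n2]
    rfl
  · refine Submodule.eq_top_iff'.mpr fun w => ?_
    set M := (Submodule.span ℂ
        {w : WithLp 2 (X × lp (fun _ : ℕ => WithLp 2 (X1 × X2)) 2) |
          ∃ (n1 n2 : ℕ) (x : X),
            w = ((V1 ^ n1) * (V2 ^ n2))
              (WithLp.toLp 2 (x, 0) : WithLp 2 (X × lp (fun _ : ℕ => WithLp 2 (X1 × X2)) 2))}
      ).topologicalClosure with hM
    have hgenM : ∀ (a b : ℕ) (x : X),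
        ((V1 ^ a) * (V2 ^ b)) (WithLp.toLp 2 (x, 0) :
          WithLp 2 (X × lp (fun _ : ℕ => WithLp 2 (X1 × X2)) 2)) ∈ M :=
      fun a b x =>
        Submodule.le_topologicalClosure _ (Submodule.subset_span ⟨a, b, x, rfl⟩)
    have hmem0 : ∀ x : X,
        (WithLp.toLp 2 (x, 0) : WithLp 2 (X × lp (fun _ : ℕ => WithLp 2 (X1 × X2)) 2)) ∈ M := by
      intro x
      have h := hgenM 0 0 x
      simpa using h
    -- M is invariant under V1 and V2
    have hinv : ∀ V : WithLp 2 (X × lp (fun _ : ℕ => WithLp 2 (X1 × X2)) 2) →L[ℂ]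
        WithLp 2 (X × lp (fun _ : ℕ => WithLp 2 (X1 × X2)) 2),
        (∀ (a b : ℕ) (x : X), V (((V1 ^ a) * (V2 ^ b))
          (WithLp.toLp 2 (x, 0) : WithLp 2 (X × lp (fun _ : ℕ => WithLp 2 (X1 × X2)) 2))) ∈ M) →
        ∀ u ∈ M, V u ∈ M := by
      intro V hg u hu
      have hclosed : IsClosed ((M.comap V.toLinearMap :
          Submodule ℂ (WithLp 2 (X × lp (fun _ : ℕ => WithLp 2 (X1 × X2)) 2))) :
          Set (WithLp 2 (X × lp (fun _ : ℕ => WithLp 2 (X1 × X2)) 2))) := by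
        have heq : ((M.comap V.toLinearMap :
            Submodule ℂ (WithLp 2 (X × lp (fun _ : ℕ => WithLp 2 (X1 × X2)) 2))) :
            Set (WithLp 2 (X × lp (fun _ : ℕ => WithLp 2 (X1 × X2)) 2)))
            = V ⁻¹' (M : Set (WithLp 2 (X × lp (fun _ : ℕ => WithLp 2 (X1 × X2)) 2))) := rfl
        rw [heq]
        exact (Submodule.isClosed_topologicalClosure _).preimage V.continuous
      have hle : M ≤ M.comap V.toLinearMap := by
        rw [hM]
        refine Submodule.topologicalClosure_minimal _ ?_ hclosed
        refine Submodule.span_le.2 ?_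
        rintro g ⟨a, b, x, rfl⟩
        exact hg a b x
      exact hle hu
    have hinv1 : ∀ u ∈ M, V1 u ∈ M := by
      refine hinv V1 fun a b x => ?_
      have heq : V1 (((V1 ^ a) * (V2 ^ b))
          (WithLp.toLp 2 (x, 0) : WithLp 2 (X × lp (fun _ : ℕ => WithLp 2 (X1 × X2)) 2)))
          = ((V1 ^ (a+1)) * (V2 ^ b))
          (WithLp.toLp 2 (x, 0) : WithLp 2 (X × lp (fun _ : ℕ => WithLp 2 (X1 × X2)) 2)) := by
        rw [pow_succ' V1 a, ContinuousLinearMap.mul_apply, ContinuousLinearMap.mul_apply,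
          ContinuousLinearMap.mul_apply]
      rw [heq]
      exact hgenM (a+1) b x
    have hinv2 : ∀ u ∈ M, V2 u ∈ M := by
      refine hinv V2 fun a b x => ?_
      have h12 : V1 * V2 = V2 * V1 := hcommV
      have halg : V2 * ((V1 ^ a) * (V2 ^ b)) = (V1 ^ a) * (V2 ^ (b+1)) := by
        rw [← mul_assoc, (Commute.pow_right h12.symm a).eq, mul_assoc, ← pow_succ' V2 b]
      have heq : V2 (((V1 ^ a) * (V2 ^ b))
          (WithLp.toLp 2 (x, 0) : WithLp 2 (X × lp (fun _ : ℕ => WithLp 2 (X1 × X2)) 2)))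
          = ((V1 ^ a) * (V2 ^ (b+1)))
          (WithLp.toLp 2 (x, 0) : WithLp 2 (X × lp (fun _ : ℕ => WithLp 2 (X1 × X2)) 2)) := by
        rw [← ContinuousLinearMap.mul_apply, halg]
      rw [heq]
      exact hgenM a (b+1) x
    -- dropping the X-component
    have hdrop : ∀ (a : X) (u : lp (fun _ : ℕ => WithLp 2 (X1 × X2)) 2),
        (WithLp.toLp 2 (a, u) : WithLp 2 (X × lp (fun _ : ℕ => WithLp 2 (X1 × X2)) 2)) ∈ M →
        (WithLp.toLp 2 (0, u) : WithLp 2 (X × lp (fun _ : ℕ => WithLp 2 (X1 × X2)) 2)) ∈ M := by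
      intro a u hau
      have h2 := M.sub_mem hau (hmem0 a)
      have heq : (WithLp.toLp 2 (a, u) : WithLp 2 (X × lp (fun _ : ℕ => WithLp 2 (X1 × X2)) 2))
          - (WithLp.toLp 2 (a, 0) : WithLp 2 (X × lp (fun _ : ℕ => WithLp 2 (X1 × X2)) 2))
          = (WithLp.toLp 2 (0, u) : WithLp 2 (X × lp (fun _ : ℕ => WithLp 2 (X1 × X2)) 2)) := by
        refine wext ?_ ?_
        · show a - a = 0
          rw [sub_self]
        · show u - 0 = u
          rw [sub_zero]
      rwa [heq] at h2
    -- base blocks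
    have hA0 : ∀ p : X1,
        (WithLp.toLp 2 (0, lp.single 2 0 (pmk p 0)) :
          WithLp 2 (X × lp (fun _ : ℕ => WithLp 2 (X1 × X2)) 2)) ∈ M := by
      intro p
      have h1 := hinv1 _ (hmem0 (j1.symm p))
      rw [show V1 (WithLp.toLp 2 (j1.symm p, 0) :
          WithLp 2 (X × lp (fun _ : ℕ => WithLp 2 (X1 × X2)) 2)) = _
        from V1fun_base S j1 T1 (j1.symm p)] at h1
      rw [j1.apply_symm_apply] at h1
      exact hdrop _ _ h1
    have hB0 : ∀ b : X2,
        (WithLp.toLp 2 (0, lp.single 2 0 (S.symm (pmk 0 b))) :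
          WithLp 2 (X × lp (fun _ : ℕ => WithLp 2 (X1 × X2)) 2)) ∈ M := by
      intro b
      have h1 := hinv2 _ (hmem0 (j2.symm b))
      rw [show V2 (WithLp.toLp 2 (j2.symm b, 0) :
          WithLp 2 (X × lp (fun _ : ℕ => WithLp 2 (X1 × X2)) 2)) = _
        from V2fun_base S j2 T2 (j2.symm b)] at h1
      rw [j2.apply_symm_apply] at h1
      exact hdrop _ _ h1
    -- step lemmas
    have hstepA : ∀ k : ℕ, (∀ y : WithLp 2 (X1 × X2),
        (WithLp.toLp 2 (0, lp.single 2 k y) :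
          WithLp 2 (X × lp (fun _ : ℕ => WithLp 2 (X1 × X2)) 2)) ∈ M) →
        ∀ p : X1, (WithLp.toLp 2 (0, lp.single 2 (k+1) (pmk p 0)) :
          WithLp 2 (X × lp (fun _ : ℕ => WithLp 2 (X1 × X2)) 2)) ∈ M := by
      intro k hk p
      have h1 := hinv1 _ (hk (S.symm (pmk p 0)))
      rw [show V1 (WithLp.toLp 2 (0, lp.single 2 k (S.symm (pmk p 0))) :
          WithLp 2 (X × lp (fun _ : ℕ => WithLp 2 (X1 × X2)) 2)) = _
        from V1fun_single S j1 T1 k (S.symm (pmk p 0))] at h1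
      rw [S.apply_symm_apply] at h1
      simpa only [pmk_fst, pmk_snd, pmk_zero, single_zero', zero_add] using h1
    have hstepB : ∀ k : ℕ, (∀ y : WithLp 2 (X1 × X2),
        (WithLp.toLp 2 (0, lp.single 2 k y) :
          WithLp 2 (X × lp (fun _ : ℕ => WithLp 2 (X1 × X2)) 2)) ∈ M) →
        ∀ b : X2, (WithLp.toLp 2 (0, lp.single 2 (k+1) (S.symm (pmk 0 b))) :
          WithLp 2 (X × lp (fun _ : ℕ => WithLp 2 (X1 × X2)) 2)) ∈ M := by
      intro k hk b
      have h1 := hinv2 _ (hk (pmk 0 b))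
      rw [show V2 (WithLp.toLp 2 (0, lp.single 2 k (pmk 0 b)) :
          WithLp 2 (X × lp (fun _ : ℕ => WithLp 2 (X1 × X2)) 2)) = _
        from V2fun_single S j2 T2 k (pmk 0 b)] at h1
      simpa only [pmk_fst, pmk_snd, pmk_zero, map_zero, single_zero', zero_add] using h1
    -- a full block from the two generating families
    have hfull : ∀ k : ℕ,
        (∀ p : X1, (WithLp.toLp 2 (0, lp.single 2 k (pmk p 0)) :
          WithLp 2 (X × lp (fun _ : ℕ => WithLp 2 (X1 × X2)) 2)) ∈ M) →
        (∀ b : X2, (WithLp.toLp 2 (0, lp.single 2 k (S.symm (pmk 0 b))) :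
          WithLp 2 (X × lp (fun _ : ℕ => WithLp 2 (X1 × X2)) 2)) ∈ M) →
        ∀ y : WithLp 2 (X1 × X2), (WithLp.toLp 2 (0, lp.single 2 k y) :
          WithLp 2 (X × lp (fun _ : ℕ => WithLp 2 (X1 × X2)) 2)) ∈ M := by
      intro k hA hB y
      have hsymm1 : ∀ p : X1, (WithLp.toLp 2 (0, lp.single 2 k (S.symm (pmk p 0))) :
          WithLp 2 (X × lp (fun _ : ℕ => WithLp 2 (X1 × X2)) 2)) ∈ M := by
        intro p
        have h1 := hinv2 _ (hA p)
        rw [show V2 (WithLp.toLp 2 (0, lp.single 2 k (pmk p 0)) :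
            WithLp 2 (X × lp (fun _ : ℕ => WithLp 2 (X1 × X2)) 2)) = _
          from V2fun_single S j2 T2 k (pmk p 0)] at h1
        simpa only [pmk_fst, pmk_snd, pmk_zero, map_zero, single_zero', add_zero] using h1
      have hsymm : ∀ z : WithLp 2 (X1 × X2), (WithLp.toLp 2 (0, lp.single 2 k (S.symm z)) :
          WithLp 2 (X × lp (fun _ : ℕ => WithLp 2 (X1 × X2)) 2)) ∈ M := by
        intro z
        have h3 := M.add_mem (hsymm1 z.fst) (hB z.snd)
        have hug : lp.single 2 k (S.symm (pmk (z.fst) 0)) + lp.single 2 k (S.symm (pmk 0 (z.snd)))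
            = (lp.single 2 k (S.symm z) : lp (fun _ : ℕ => WithLp 2 (X1 × X2)) 2) := by
          rw [← single_add', ← map_add S.symm, pmk_add, add_zero, zero_add, pmk_eta]
        have heq : (WithLp.toLp 2 (0, lp.single 2 k (S.symm (pmk (z.fst) 0))) :
            WithLp 2 (X × lp (fun _ : ℕ => WithLp 2 (X1 × X2)) 2))
            + (WithLp.toLp 2 (0, lp.single 2 k (S.symm (pmk 0 (z.snd)))) :
            WithLp 2 (X × lp (fun _ : ℕ => WithLp 2 (X1 × X2)) 2))
            = (WithLp.toLp 2 (0, lp.single 2 k (S.symm z)) :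
            WithLp 2 (X × lp (fun _ : ℕ => WithLp 2 (X1 × X2)) 2)) := by
          show (WithLp.toLp 2 ((0 : X) + 0,
            lp.single 2 k (S.symm (pmk (z.fst) 0)) + lp.single 2 k (S.symm (pmk 0 (z.snd)))) :
            WithLp 2 (X × lp (fun _ : ℕ => WithLp 2 (X1 × X2)) 2)) = _
          rw [hug, add_zero]
        rwa [heq] at h3
      have hy : y = S.symm (S y) := (S.symm_apply_apply y).symm
      rw [hy]
      exact hsymm (S y)
    have hsingle : ∀ (k : ℕ) (y : WithLp 2 (X1 × X2)),
        (WithLp.toLp 2 (0, lp.single 2 k y) :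
          WithLp 2 (X × lp (fun _ : ℕ => WithLp 2 (X1 × X2)) 2)) ∈ M := by
      intro k
      induction k with
      | zero => exact hfull 0 hA0 hB0
      | succ k ih => exact hfull (k+1) (hstepA k ih) (hstepB k ih)
    have hL : ∀ m : lp (fun _ : ℕ => WithLp 2 (X1 × X2)) 2,
        (WithLp.toLp 2 (0, m) : WithLp 2 (X × lp (fun _ : ℕ => WithLp 2 (X1 × X2)) 2)) ∈ M := by
      intro m
      have hsum := lp.hasSum_single (E := fun _ : ℕ => WithLp 2 (X1 × X2)) (p := 2)
        (by norm_num) m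
      have hsum2 := (inrW (X := X)).hasSum hsum
      have hmemstep : ∀ᶠ (s : Finset ℕ) in Filter.atTop,
          (∑ i ∈ s, inrW (X := X) (lp.single 2 i (m i))) ∈
            (M : Set (WithLp 2 (X × lp (fun _ : ℕ => WithLp 2 (X1 × X2)) 2))) := by
        refine Filter.Eventually.of_forall fun s => ?_
        refine Submodule.sum_mem M fun i _ => ?_
        exact hsingle i (m i)
      exact (Submodule.isClosed_topologicalClosure _).mem_of_tendsto hsum2 hmemstep
    have hw : w = (WithLp.toLp 2 (w.fst, 0) : WithLp 2 (X × lp (fun _ : ℕ => WithLp 2 (X1 × X2)) 2))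
        + (WithLp.toLp 2 (0, w.snd) : WithLp 2 (X × lp (fun _ : ℕ => WithLp 2 (X1 × X2)) 2)) := by
      refine wext ?_ ?_
      · show w.fst = w.fst + 0
        rw [add_zero]
      · show w.snd = 0 + w.snd
        rw [zero_add]
    rw [hw]
    exact M.add_mem (hmem0 w.fst) (hL w.snd)
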